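/- Let F_q be a finite field of odd characteristic and d ∈ F_qˣ. Then the matrix t_{1,d}·u is conjugate in GSp(4,F_q) to the diagonal matrix diag(1, −1, −d, d). -/
import Mathlib


open Matrix

/-- The symplectic form `J`. -/
def Jmat (R : Type*) [CommRing R] : Matrix (Fin 4) (Fin 4) R :=
  !![0, 0, 0, 1; 0, 0, 1, 0; 0, -1, 0, 0; -1, 0, 0, 0]

/-- `GSp(4,R)`: invertible matrices `g` with `gᵀ J g = μ(g) J` for some unit `μ(g)`. -/
def GSp4 (R : Type*) [CommRing R] : Set (Matrix (Fin 4) (Fin 4) R) :=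
  {g | IsUnit g ∧ ∃ μ : Rˣ, gᵀ * Jmat R * g = (μ : R) • Jmat R}

/-- The set `M`: block matrices with rows `(a,b,0,0)`, `(c,d,0,0)`, `(0,0,λa,−λb)`,
`(0,0,−λc,λd)` with `λ` a unit and `ad − bc` a unit. -/
def Mset (R : Type*) [CommRing R] : Set (Matrix (Fin 4) (Fin 4) R) :=
  {g | ∃ a b c d lam : R, IsUnit lam ∧ IsUnit (a * d - b * c) ∧
    g = !![a, b, 0, 0; c, d, 0, 0; 0, 0, lam * a, -(lam * b); 0, 0, -(lam * c), lam * d]}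

/-- The element `u`. -/
def uEl (R : Type*) [CommRing R] : Matrix (Fin 4) (Fin 4) R :=
  !![0, 0, 1, 0; 0, 0, 0, -1; 1, 0, 0, 0; 0, -1, 0, 0]

/-- The torus element `t_{c,d} = diag(1, d, c, cd)`. -/
def tMat (R : Type*) [CommRing R] (c d : R) : Matrix (Fin 4) (Fin 4) R :=
  Matrix.diagonal ![1, d, c, c * d]

/-- The unipotent element `n_b`. -/
def nMat (R : Type*) [CommRing R] (b : R) : Matrix (Fin 4) (Fin 4) R :=
  !![1, b, 0, 0; 0, 1, 0, 0; 0, 0, 1, -b; 0, 0, 0, 1]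

/-- The element `x = n_1`. -/
def xEl (R : Type*) [CommRing R] : Matrix (Fin 4) (Fin 4) R := nMat R 1

/-- The Weyl element `w`. -/
def wEl (R : Type*) [CommRing R] : Matrix (Fin 4) (Fin 4) R :=
  !![0, 1, 0, 0; 1, 0, 0, 0; 0, 0, 0, 1; 0, 0, 1, 0]

/-- The torus `T = {t_{c,d} : c, d ∈ F_qˣ}`. -/
def Tset (Fq : Type*) [Field Fq] : Set (Matrix (Fin 4) (Fin 4) Fq) :=
  {m | ∃ c d : Fq, c ≠ 0 ∧ d ≠ 0 ∧ m = tMat Fq c d}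

/-- The unipotent group `N = {n_b : b ∈ F_q}`. -/
def Nset (Fq : Type*) [Field Fq] : Set (Matrix (Fin 4) (Fin 4) Fq) :=
  {m | ∃ b : Fq, m = nMat Fq b}


set_option maxHeartbeats 2000000 in
theorem t1du_conjugate_to_diagonal
    (Fq : Type*) [Field Fq] [Fintype Fq] (hchar : ringChar Fq ≠ 2)
    (d : Fq) (hd : d ≠ 0) :
    ∃ g ∈ GSp4 Fq,
      g * (tMat Fq 1 d * uEl Fq) * g⁻¹ = Matrix.diagonal ![1, -1, -d, d] := by
  have htwo : (2 : Fq) ≠ 0 := Ring.two_ne_zero hchar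
  set g : Matrix (Fin 4) (Fin 4) Fq :=
    !![1, 0, 1, 0; -1, 0, 1, 0; 0, 1, 0, 1; 0, 1, 0, -1] with hg
  set P : Matrix (Fin 4) (Fin 4) Fq :=
    !![1, -1, 0, 0; 0, 0, 1, 1; 1, 1, 0, 0; 0, 0, 1, -1] with hP
  have hmul : g * ((2 : Fq)⁻¹ • P) = 1 := by
    ext i j
    fin_cases i <;> fin_cases j <;>
      simp [hg, hP, Matrix.mul_apply, Fin.sum_univ_four, Matrix.one_apply,
        Matrix.vecHead, Matrix.vecTail] <;>
      field_simp <;> norm_num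
  have hginv : g⁻¹ = (2 : Fq)⁻¹ • P := Matrix.inv_eq_right_inv hmul
  have hgt : gᵀ = P := by
    ext i j
    fin_cases i <;> fin_cases j <;> simp [hg, hP, Matrix.vecHead, Matrix.vecTail]
  refine ⟨g, ⟨⟨⟨g, (2 : Fq)⁻¹ • P, hmul, mul_eq_one_comm.mp hmul⟩, rfl⟩,
    Units.mk0 (-2) (neg_ne_zero.mpr htwo), ?_⟩, ?_⟩
  · rw [hgt]
    ext i j
    fin_cases i <;> fin_cases j <;>
      simp [hg, hP, Jmat, Matrix.mul_apply, Fin.sum_univ_four, Matrix.smul_apply,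
        Units.val_mk0, Matrix.vecHead, Matrix.vecTail] <;> ring
  · have hA : tMat Fq 1 d * uEl Fq = !![0, 0, 1, 0; 0, 0, 0, -d; 1, 0, 0, 0; 0, -d, 0, 0] := by
      ext i j
      fin_cases i <;> fin_cases j <;>
        simp [tMat, uEl, Matrix.mul_apply, Fin.sum_univ_four, Matrix.diagonal_apply,
          Matrix.vecHead, Matrix.vecTail]
    have hcomm : g * !![0, 0, 1, 0; 0, 0, 0, -d; 1, 0, 0, 0; 0, -d, 0, 0] =
        (Matrix.diagonal ![1, -1, -d, d] : Matrix (Fin 4) (Fin 4) Fq) * g := by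
      ext i j
      fin_cases i <;> fin_cases j <;>
        simp [hg, Matrix.mul_apply, Fin.sum_univ_four, Matrix.diagonal_apply,
          Matrix.vecHead, Matrix.vecTail] <;> ring
    have hgg : g * g⁻¹ = 1 := by rw [hginv]; exact hmul
    rw [hA, hcomm, Matrix.mul_assoc, hgg, Matrix.mul_one]
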